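/- Let x ∈ Y be such that there exists M ∈ ℕ with x_i finite for 1 ≤ i < M and x_i = ∞ for i ≥ M, and let K ∈ ℕ satisfy K ≥ x_{M−1}. Define y ∈ Y by y_i = x_i for 0 ≤ i < M and y_i = K for i ≥ M. Then (x, y) is a scrambled pair with modulus 1/2 for F, i.e., liminf_{n→∞} D(Fⁿ(x), Fⁿ(y)) = 0 and limsup_{n→∞} D(Fⁿ(x), Fⁿ(y)) ≥ 1/2. -/

import Mathlib

open Filter

noncomputable section

instance : Fact ((0:ℝ) < 1) := ⟨one_pos⟩

/-- The unit circle `𝕊 = ℝ/ℤ` (with the metric `d₀(x,y) = min{|x−y|, 1−|x−y|}`). -/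
abbrev Circle1 := AddCircle (1 : ℝ)

/-- Points of the product space `Π_{i=0}^∞ X_i = 𝕊 × Π_{i≥1} (ℕ ∪ {∞})`:
the first component is the circle coordinate `x₀`, and the second component gives
the coordinates `x_i ∈ ℕ ∪ {∞}` for `i ≥ 1`. -/
abbrev Pt := Circle1 × (ℕ+ → ℕ∞)

/-- `1/x` for `x ∈ ℕ ∪ {∞}`, with the convention `1/∞ = 0`. -/
noncomputable def einv (x : ℕ∞) : ℝ := ((x.toNat : ℕ) : ℝ)⁻¹

/-- The metric `d_i(x,y) = |1/x − 1/y|` on `ℕ ∪ {∞}` (for `i ≥ 1`). -/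
noncomputable def dE (x y : ℕ∞) : ℝ := |einv x - einv y|

/-- The metric `D(x,y) = Σ_{i=0}^∞ d_i(x_i,y_i)/2^i` on the product space. -/
noncomputable def D (x y : Pt) : ℝ :=
  dist x.1 y.1 + ∑' i : ℕ+, dE (x.2 i) (y.2 i) / 2 ^ (i : ℕ)

/-- `Y`: the set of points whose sequence of coordinates `(x_i)_{i≥1}` is a nondecreasing
sequence in `ℕ ∪ {∞}` (with `ℕ = {1,2,…}`). -/
def Y : Set Pt := {x | (∀ i, 1 ≤ x.2 i) ∧ Monotone x.2}

/-- The skew-product map `F`: `f₀(x) = (x₀ + Σ_{i≥1} 2^{−i}·(1/x_i)) mod 1` and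
`f_i(x) = x_i + 1` for `i ≥ 1`, with `∞ + 1 = ∞`. -/
noncomputable def F (x : Pt) : Pt :=
  (x.1 + (((∑' i : ℕ+, (1 / 2 ^ (i : ℕ)) * einv (x.2 i)) : ℝ) : Circle1),
   fun i => x.2 i + 1)

/-- `(x, y)` is a scrambled pair of `F`:
`liminf_{n→∞} D(Fⁿ(x), Fⁿ(y)) = 0` and `limsup_{n→∞} D(Fⁿ(x), Fⁿ(y)) > 0`. -/
def ScrambledPair (x y : Pt) : Prop :=
  liminf (fun n : ℕ => D (F^[n] x) (F^[n] y)) atTop = 0 ∧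
  0 < limsup (fun n : ℕ => D (F^[n] x) (F^[n] y)) atTop

/-! ### Auxiliary lemmas -/

lemma einv_nonneg' (z : ℕ∞) : 0 ≤ einv z := by unfold einv; positivity

lemma einv_le_one' (z : ℕ∞) : einv z ≤ 1 := by
  unfold einv
  rcases Nat.eq_zero_or_pos z.toNat with h | h
  · simp [h]
  · rw [inv_le_one_iff₀]
    right
    exact_mod_cast h

lemma summable_geo_pnat : Summable (fun i : ℕ+ => ((1:ℝ) / 2 ^ (i : ℕ))) := by
  have h : Summable (fun n : ℕ => ((1:ℝ)/2) ^ n) := summable_geometric_two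
  have := h.comp_injective (fun a b h => PNat.coe_injective h : Function.Injective (fun i : ℕ+ => (i : ℕ)))
  simpa [Function.comp_def, div_pow] using this

lemma tsum_geo_pnat_le : (∑' i : ℕ+, ((1:ℝ) / 2 ^ (i : ℕ))) ≤ 2 := by
  have h := Summable.tsum_le_tsum_of_inj (fun i : ℕ+ => (i : ℕ))
    (fun a b h => PNat.coe_injective h)
    (fun c _ => by positivity)
    (fun i => le_of_eq (by rw [div_pow, one_pow]))
    summable_geo_pnat summable_geometric_two
  calc (∑' i : ℕ+, ((1:ℝ) / 2 ^ (i : ℕ))) ≤ ∑' n : ℕ, ((1:ℝ)/2) ^ n := h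
    _ = 2 := tsum_geometric_two

/-- The sum appearing in the first component of `F`. -/
noncomputable def G (u : ℕ+ → ℕ∞) : ℝ := ∑' i : ℕ+, (1 / 2 ^ (i : ℕ)) * einv (u i)

lemma summable_term (u : ℕ+ → ℕ∞) :
    Summable (fun i : ℕ+ => (1 / 2 ^ (i : ℕ) : ℝ) * einv (u i)) := by
  refine Summable.of_nonneg_of_le
    (fun i => mul_nonneg (by positivity) (einv_nonneg' _))
    (fun i => ?_) summable_geo_pnat
  exact mul_le_of_le_one_right (by positivity) (einv_le_one' _)

lemma F_iter (z : Pt) (n : ℕ) :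
    F^[n] z = (z.1 + ((∑ k ∈ Finset.range n, G (fun i => z.2 i + (k : ℕ∞)) : ℝ) : Circle1),
      fun i => z.2 i + (n : ℕ∞)) := by
  induction n with
  | zero =>
    apply Prod.ext <;> simp
  | succ n ih =>
    rw [Function.iterate_succ_apply', ih]
    apply Prod.ext
    · show _ + _ = _
      rw [Finset.sum_range_succ, AddCircle.coe_add, ← add_assoc]
      rfl
    · funext i
      show z.2 i + (n : ℕ∞) + 1 = _
      rw [add_assoc]
      show z.2 i + ((n : ℕ∞) + 1) = z.2 i + ((n + 1 : ℕ) : ℕ∞)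
      norm_cast

lemma round_min (r : ℝ) (m : ℤ) : |r - round r| ≤ |r - m| := by
  rcases eq_or_ne m (round r) with h | h
  · rw [h]
  · have h1 : (1:ℝ) ≤ |(round r : ℝ) - m| := by
      have : round r - m ≠ 0 := sub_ne_zero.mpr (Ne.symm h)
      have := Int.one_le_abs this
      calc (1:ℝ) ≤ |((round r - m : ℤ) : ℝ)| := by exact_mod_cast this
        _ = |(round r : ℝ) - m| := by push_cast; ring_nf
    have h2 : |r - round r| ≤ 1/2 := abs_sub_round r
    have h3 : |(round r : ℝ) - m| ≤ |(round r : ℝ) - r| + |r - m| := abs_sub_le _ _ _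
    have h4 : |(round r : ℝ) - r| = |r - round r| := abs_sub_comm _ _
    linarith

lemma norm_circle_eq (r : ℝ) : ‖(r : Circle1)‖ = |r - round r| := by
  have := AddCircle.norm_eq (p := (1:ℝ)) (x := r)
  simpa using this

lemma norm_circle_le (r : ℝ) (m : ℤ) : ‖(r : Circle1)‖ ≤ |r - m| := by
  rw [norm_circle_eq]; exact round_min r m

lemma norm_circle_ge (r : ℝ) (m : ℤ) (ε : ℝ) (h : |r - ((m : ℝ) + 1/2)| < ε) :
    1/2 - ε ≤ ‖(r : Circle1)‖ := by
  rw [norm_circle_eq]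
  set q := round r with hq
  have key : (1:ℝ)/2 ≤ |(m : ℝ) + 1/2 - q| := by
    have ht : (0:ℤ) ≤ m - q ∨ m - q ≤ -1 := by omega
    have ht' : (0:ℝ) ≤ (m:ℝ) - q ∨ (m:ℝ) - q ≤ -1 := by
      rcases ht with h | h
      · left; exact_mod_cast sub_nonneg.mpr (by omega : q ≤ m)
      · right; have : ((m - q : ℤ) : ℝ) ≤ -1 := by exact_mod_cast h
        push_cast at this; linarith
    rw [le_abs]
    rcases ht' with h | h
    · left; linarith
    · right; linarith
  have tri : |(m : ℝ) + 1/2 - q| ≤ |(m:ℝ) + 1/2 - r| + |r - q| := abs_sub_le _ _ _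
  have : |(m:ℝ) + 1/2 - r| = |r - ((m:ℝ) + 1/2)| := abs_sub_comm _ _
  linarith

lemma freq_near (a : ℕ → ℝ) (htop : Tendsto a atTop atTop)
    (hstep : Tendsto (fun n => a (n + 1) - a n) atTop (nhds 0)) (c ε : ℝ) (hε : 0 < ε) :
    ∃ᶠ n in atTop, ∃ m : ℤ, c + m ≤ a n ∧ a n < c + m + ε := by
  rw [frequently_atTop]
  intro N
  obtain ⟨N1, hN1⟩ : ∃ N1, ∀ n ≥ N1, a (n + 1) - a n < ε := by
    have h := hstep.eventually (gt_mem_nhds hε)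
    simpa using (eventually_atTop.mp h)
  set N2 := max N N1 with hN2
  set m : ℤ := ⌊a N2 - c⌋ + 1 with hm
  have hmlt : a N2 < c + m := by
    have := Int.lt_floor_add_one (a N2 - c)
    push_cast [hm]
    linarith
  have hex : ∃ j : ℕ, c + m ≤ a (N2 + j) := by
    obtain ⟨n1, hn1⟩ := eventually_atTop.mp (htop.eventually_ge_atTop (c + m))
    exact ⟨n1, hn1 _ (Nat.le_add_left _ _)⟩
  set j := Nat.find hex with hj
  have hspec : c + m ≤ a (N2 + j) := Nat.find_spec hex
  have hj0 : j ≠ 0 := by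
    intro h
    rw [h] at hspec
    simp at hspec
    linarith
  have hprev : a (N2 + (j - 1)) < c + m := by
    have := Nat.find_min hex (m := j - 1) (by omega)
    linarith [lt_of_not_ge this]
  have hstep' : a (N2 + j) - a (N2 + (j - 1)) < ε := by
    have he : N2 + (j - 1) + 1 = N2 + j := by omega
    have := hN1 (N2 + (j - 1)) (le_trans (le_max_right _ _) (Nat.le_add_right _ _))
    rw [he] at this
    exact this
  exact ⟨N2 + j, le_trans (le_max_left _ _) (Nat.le_add_right _ _), m, hspec, by linarith⟩

/-- Claim 1: let `x ∈ Y` have `x_i` finite for `1 ≤ i < M` and `x_i = ∞` for `i ≥ M`,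
let `K ∈ ℕ` satisfy `K ≥ x_{M−1}` (i.e. `x_i ≤ K` for all `1 ≤ i < M`), and let `y ∈ Y` be
given by `y_i = x_i` for `0 ≤ i < M` and `y_i = K` for `i ≥ M`. Then `(x, y)` is a scrambled
pair with modulus `1/2` for `F`: `liminf_{n→∞} D(Fⁿ(x), Fⁿ(y)) = 0` and
`limsup_{n→∞} D(Fⁿ(x), Fⁿ(y)) ≥ 1/2`. -/
theorem claim1_scrambled_with_modulus_half
    (x : Pt) (hx : x ∈ Y) (M : ℕ+)
    (hfin : ∀ i : ℕ+, i < M → x.2 i ≠ ⊤) (hinf : ∀ i : ℕ+, M ≤ i → x.2 i = ⊤)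
    (K : ℕ) (hK1 : 1 ≤ K) (hK : ∀ i : ℕ+, i < M → x.2 i ≤ (K : ℕ∞))
    (y : Pt) (hy : y ∈ Y) (hy0 : y.1 = x.1)
    (hyi : ∀ i : ℕ+, i < M → y.2 i = x.2 i)
    (hyK : ∀ i : ℕ+, M ≤ i → y.2 i = (K : ℕ∞)) :
    liminf (fun n : ℕ => D (F^[n] x) (F^[n] y)) atTop = 0 ∧
    1 / 2 ≤ limsup (fun n : ℕ => D (F^[n] x) (F^[n] y)) atTop := by
  classical
  -- the difference of the `i`-th reciprocals after `n` steps
  have hterm : ∀ (i : ℕ+) (n : ℕ),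
      einv (y.2 i + (n : ℕ∞)) - einv (x.2 i + (n : ℕ∞))
        = if M ≤ i then (((K + n : ℕ) : ℝ))⁻¹ else 0 := by
    intro i n
    by_cases h : M ≤ i
    · rw [if_pos h, hinf i h, hyK i h, top_add]
      have hKn : (K : ℕ∞) + (n : ℕ∞) = ((K + n : ℕ) : ℕ∞) := by push_cast; rfl
      rw [hKn]
      unfold einv
      rw [ENat.toNat_coe, ENat.toNat_top]
      norm_num
    · rw [if_neg h, hyi i (lt_of_not_ge h), sub_self]
  set s : ℕ → ℝ := fun n =>
    ∑' i : ℕ+, (1 / 2 ^ (i : ℕ) : ℝ) * (einv (y.2 i + (n : ℕ∞)) - einv (x.2 i + (n : ℕ∞)))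
    with hs
  have hsummable : ∀ n : ℕ, Summable (fun i : ℕ+ =>
      (1 / 2 ^ (i : ℕ) : ℝ) * (einv (y.2 i + (n : ℕ∞)) - einv (x.2 i + (n : ℕ∞)))) := by
    intro n
    have h1 := summable_term (fun i => y.2 i + (n : ℕ∞))
    have h2 := summable_term (fun i => x.2 i + (n : ℕ∞))
    simpa [mul_sub] using h1.sub h2
  have hs_lb : ∀ n : ℕ, (1 / 2 ^ (M : ℕ) : ℝ) * (((K + n : ℕ) : ℝ))⁻¹ ≤ s n := by
    intro n
    have h := Summable.le_tsum (hsummable n) M (fun j _ => by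
      rw [hterm j n]
      split <;> positivity)
    rwa [hterm M n, if_pos le_rfl] at h
  have hs_nonneg : ∀ n : ℕ, 0 ≤ s n := by
    intro n
    refine le_trans (by positivity) (hs_lb n)
  have hs_ub : ∀ n : ℕ, s n ≤ 2 * (((K + n : ℕ) : ℝ))⁻¹ := by
    intro n
    have hmaj : Summable (fun i : ℕ+ => ((1:ℝ) / 2 ^ (i : ℕ)) * (((K + n : ℕ) : ℝ))⁻¹) :=
      summable_geo_pnat.mul_right _
    have h1 : s n ≤ ∑' i : ℕ+, ((1:ℝ) / 2 ^ (i : ℕ)) * (((K + n : ℕ) : ℝ))⁻¹ := by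
      refine Summable.tsum_le_tsum (fun i => ?_) (hsummable n) hmaj
      rw [hterm i n]
      split
      · exact le_rfl
      · simp only [mul_zero]
        positivity
    rw [tsum_mul_right] at h1
    have h2 : (∑' i : ℕ+, ((1:ℝ) / 2 ^ (i : ℕ))) * (((K + n : ℕ) : ℝ))⁻¹
        ≤ 2 * (((K + n : ℕ) : ℝ))⁻¹ :=
      mul_le_mul_of_nonneg_right tsum_geo_pnat_le (by positivity)
    linarith
  -- the inverse factor tends to 0
  have hKn_top : Tendsto (fun n : ℕ => (((K + n : ℕ) : ℝ))) atTop atTop := by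
    apply tendsto_natCast_atTop_atTop.comp
    exact tendsto_atTop_mono (fun n => Nat.le_add_left n K) tendsto_id
  have hinv_zero : Tendsto (fun n : ℕ => (((K + n : ℕ) : ℝ))⁻¹) atTop (nhds 0) :=
    tendsto_inv_atTop_zero.comp hKn_top
  have hs_zero : Tendsto s atTop (nhds 0) := by
    have h2 : Tendsto (fun n : ℕ => 2 * (((K + n : ℕ) : ℝ))⁻¹) atTop (nhds 0) := by
      have := hinv_zero.const_mul (2:ℝ)
      simpa using this
    exact squeeze_zero hs_nonneg hs_ub h2
  -- the accumulated drift
  set δ : ℕ → ℝ := fun n => ∑ k ∈ Finset.range n, s k with hδ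
  have hδ_step : ∀ n, δ (n + 1) - δ n = s n := by
    intro n
    simp [hδ, Finset.sum_range_succ]
  have hδ_top : Tendsto δ atTop atTop := by
    have hL_nonneg : ∀ k : ℕ, 0 ≤ (1 / 2 ^ (M : ℕ) : ℝ) * (((K + k : ℕ) : ℝ))⁻¹ :=
      fun k => by positivity
    have hnotsum : ¬ Summable (fun k : ℕ => (((K + k : ℕ) : ℝ))⁻¹) := by
      intro hsum
      have h1 : Summable (fun k : ℕ => (((k + K : ℕ) : ℝ))⁻¹) := by
        simpa [Nat.add_comm] using hsum
      have h2 : Summable (fun k : ℕ => ((k : ℝ))⁻¹) :=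
        (summable_nat_add_iff K).mp h1
      exact Real.not_summable_natCast_inv h2
    have hLnotsum : ¬ Summable
        (fun k : ℕ => (1 / 2 ^ (M : ℕ) : ℝ) * (((K + k : ℕ) : ℝ))⁻¹) := by
      intro hsum
      exact hnotsum ((summable_mul_left_iff
        (by positivity : (1 / 2 ^ (M : ℕ) : ℝ) ≠ 0)).mp hsum)
    have hpart := (not_summable_iff_tendsto_nat_atTop_of_nonneg hL_nonneg).mp hLnotsum
    exact tendsto_atTop_mono
      (fun n => Finset.sum_le_sum (fun k _ => hs_lb k)) hpart
  have hδ_stepT : Tendsto (fun n => δ (n + 1) - δ n) atTop (nhds 0) := by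
    simp only [hδ_step]
    exact hs_zero
  -- the value of `D` after `n` iterations
  have hGk : ∀ k : ℕ,
      G (fun i => y.2 i + (k : ℕ∞)) - G (fun i => x.2 i + (k : ℕ∞)) = s k := by
    intro k
    rw [G, G, ← Summable.tsum_sub (summable_term _) (summable_term _), hs]
    exact tsum_congr fun i => by ring
  have hAB : ∀ n : ℕ, (∑ k ∈ Finset.range n, G (fun i => y.2 i + (k : ℕ∞)))
      - (∑ k ∈ Finset.range n, G (fun i => x.2 i + (k : ℕ∞))) = δ n := by
    intro n
    rw [← Finset.sum_sub_distrib, hδ]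
    exact Finset.sum_congr rfl fun k _ => hGk k
  have hD : ∀ n : ℕ, D (F^[n] x) (F^[n] y) = ‖((δ n : ℝ) : Circle1)‖ + s n := by
    intro n
    have hdist : dist (F^[n] x).1 (F^[n] y).1 = ‖((δ n : ℝ) : Circle1)‖ := by
      rw [F_iter x n, F_iter y n, hy0]
      simp only
      rw [dist_add_left, dist_eq_norm', ← AddCircle.coe_sub, hAB n]
    have htail : (∑' i : ℕ+, dE ((F^[n] x).2 i) ((F^[n] y).2 i) / 2 ^ (i : ℕ)) = s n := by
      rw [hs]
      apply tsum_congr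
      intro i
      rw [F_iter x n, F_iter y n]
      simp only
      rw [dE]
      have h0 : einv (x.2 i + (n : ℕ∞)) ≤ einv (y.2 i + (n : ℕ∞)) := by
        have h := hterm i n
        have h' : 0 ≤ einv (y.2 i + (n : ℕ∞)) - einv (x.2 i + (n : ℕ∞)) := by
          rw [h]; split <;> positivity
        linarith
      rw [abs_sub_comm, abs_of_nonneg (sub_nonneg.mpr h0)]
      ring
    simp only [D]
    rw [hdist, htail]
  -- boundedness
  have hd_nonneg : ∀ n, 0 ≤ D (F^[n] x) (F^[n] y) := fun n => by
    rw [hD n]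
    have := norm_nonneg ((δ n : ℝ) : Circle1)
    linarith [hs_nonneg n]
  have hd_bdd : ∀ n, D (F^[n] x) (F^[n] y) ≤ 3 := fun n => by
    rw [hD n]
    have h1 : ‖((δ n : ℝ) : Circle1)‖ ≤ 1/2 := by
      rw [norm_circle_eq]; exact abs_sub_round _
    have h2 : s n ≤ 2 * (((K + n : ℕ) : ℝ))⁻¹ := hs_ub n
    have h3 : (((K + n : ℕ) : ℝ))⁻¹ ≤ 1 := by
      rw [inv_le_one_iff₀]
      right
      exact_mod_cast le_trans hK1 (Nat.le_add_right K n)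
    linarith
  have hbd_le : IsBoundedUnder (· ≤ ·) atTop (fun n : ℕ => D (F^[n] x) (F^[n] y)) :=
    isBoundedUnder_of ⟨3, hd_bdd⟩
  have hbd_ge : IsBoundedUnder (· ≥ ·) atTop (fun n : ℕ => D (F^[n] x) (F^[n] y)) :=
    isBoundedUnder_of ⟨0, hd_nonneg⟩
  constructor
  · apply le_antisymm
    · by_contra hcon
      push_neg at hcon
      have hL : ∀ ε : ℝ, 0 < ε →
          liminf (fun n : ℕ => D (F^[n] x) (F^[n] y)) atTop ≤ ε := by
        intro ε hε
        have hfreq : ∃ᶠ n in atTop, D (F^[n] x) (F^[n] y) ≤ ε := by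
          have h1 := freq_near δ hδ_top hδ_stepT 0 (ε/2) (by linarith)
          have h2 : ∀ᶠ n in atTop, s n < ε/2 :=
            hs_zero.eventually (gt_mem_nhds (by linarith))
          refine (h1.and_eventually h2).mono ?_
          rintro n ⟨⟨m, hm1, hm2⟩, hsn⟩
          rw [hD n]
          have hnle : ‖((δ n : ℝ) : Circle1)‖ ≤ |δ n - m| := norm_circle_le _ m
          have habs : |δ n - (m : ℝ)| < ε/2 := by
            rw [abs_lt]; constructor <;> linarith
          linarith
        exact liminf_le_of_frequently_le hfreq hbd_ge
      have := hL (liminf (fun n : ℕ => D (F^[n] x) (F^[n] y)) atTop / 2) (by linarith)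
      linarith
    · exact le_liminf_of_le hbd_le.isCoboundedUnder_ge
        (Eventually.of_forall hd_nonneg)
  · apply le_of_forall_sub_le
    intro ε hε
    apply le_limsup_of_frequently_le _ hbd_le
    have h1 := freq_near δ hδ_top hδ_stepT (1/2) ε hε
    refine h1.mono ?_
    rintro n ⟨m, hm1, hm2⟩
    rw [hD n]
    have habs : |δ n - ((m : ℝ) + 1/2)| < ε := by
      rw [abs_lt]; constructor <;> linarith
    have hg := norm_circle_ge (δ n) m ε habs
    linarith [hs_nonneg n]
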